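/- arXiv:1312.7380 — 2 statements merged into one kernel-verified Lean document; each statement's English description precedes it below -/
import Mathlib

section
/- For every x = (z,u) ∈ ℝ^{2d}, 𝒰₂(x) = U''(z₂−z₁) e_{u₂} + (γ₁² − V''(z₁) − U''(z₂−z₁)) e_{u₁} − γ₁ e_{z₁}. -/
open scoped BigOperators

noncomputable section

abbrev E (d : ℕ) : Type := (Fin d → ℝ) × (Fin d → ℝ)

def ez (d : ℕ) (i : Fin d) : E d := (Pi.single i 1, 0)

def eu (d : ℕ) (i : Fin d) : E d := (0, Pi.single i 1)

noncomputable def ham (d : ℕ) (V U : ℝ → ℝ) (x : E d) : ℝ :=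
  (∑ i : Fin d, ((x.2 i) ^ 2 / 2 + V (x.1 i))) +
    ∑ i : Fin (d - 1),
      U (x.1 ⟨i.1 + 1, by have := i.2; omega⟩ - x.1 ⟨i.1, by have := i.2; omega⟩)

noncomputable def drift (d : ℕ) (γ₁ γd : ℝ) (V U : ℝ → ℝ) (x : E d) : E d :=
  (x.2, fun i =>
    -(fderiv ℝ (ham d V U) x (ez d i)) -
      (if i.1 = 0 then γ₁ * x.2 i else 0) -
      (if i.1 = d - 1 then γd * x.2 i else 0))

noncomputable def lie (d : ℕ) (X Y : E d → E d) (x : E d) : E d :=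
  fderiv ℝ Y x (X x) - fderiv ℝ X x (Y x)

noncomputable def UU (d : ℕ) (b : E d → E d) (v : E d) : ℕ → E d → E d
  | 0 => fun _ => v
  | n + 1 => lie d (UU d b v n) b

namespace Stmt11Aux

open ContinuousLinearMap

variable (d : ℕ)

def p1 (i : Fin d) : E d →L[ℝ] ℝ := (proj i).comp (fst ℝ (Fin d → ℝ) (Fin d → ℝ))
def p2 (i : Fin d) : E d →L[ℝ] ℝ := (proj i).comp (snd ℝ (Fin d → ℝ) (Fin d → ℝ))

def jf (j : Fin (d - 1)) : Fin d := ⟨j.1, by have := j.2; omega⟩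
def js (j : Fin (d - 1)) : Fin d := ⟨j.1 + 1, by have := j.2; omega⟩

variable {d}

@[simp] lemma p1_apply (i : Fin d) (x : E d) : p1 d i x = x.1 i := rfl
@[simp] lemma p2_apply (i : Fin d) (x : E d) : p2 d i x = x.2 i := rfl

variable {V U : ℝ → ℝ}

lemma hle : ((⊤ : ℕ∞) : WithTop ℕ∞) ≠ 0 := by simp

noncomputable def Lham (V U : ℝ → ℝ) (x : E d) : E d →L[ℝ] ℝ :=
  (∑ i : Fin d, ((x.2 i) • p2 d i + (deriv V (x.1 i)) • p1 d i)) +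
    ∑ j : Fin (d - 1),
      (deriv U (x.1 (js d j) - x.1 (jf d j))) • (p1 d (js d j) - p1 d (jf d j))

lemma ham_hasFDerivAt (hV : ContDiff ℝ (⊤ : ℕ∞) V) (hU : ContDiff ℝ (⊤ : ℕ∞) U)
    (x : E d) : HasFDerivAt (ham d V U) (Lham V U x) x := by
  have h1 : ∀ i : Fin d, HasFDerivAt (fun y : E d => (y.2 i) ^ 2 / 2 + V (y.1 i))
      ((x.2 i) • p2 d i + (deriv V (x.1 i)) • p1 d i) x := by
    intro i
    have ha : HasFDerivAt (fun y : E d => (y.2 i) ^ 2 / 2) ((x.2 i) • p2 d i) x := by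
      have h := ((hasDerivAt_pow 2 (x.2 i)).div_const 2).comp_hasFDerivAt x
        (p2 d i).hasFDerivAt
      have : ((2 : ℕ) : ℝ) * (x.2 i) ^ 1 / 2 = x.2 i := by push_cast; ring
      simpa [Function.comp_def, this] using h
    have hb : HasFDerivAt (fun y : E d => V (y.1 i)) ((deriv V (x.1 i)) • p1 d i) x := by
      have h := ((hV.differentiable hle) (x.1 i)).hasDerivAt.comp_hasFDerivAt x
        (p1 d i).hasFDerivAt
      simpa [Function.comp_def] using h
    exact ha.add hb
  have h2 : ∀ j : Fin (d - 1),
      HasFDerivAt (fun y : E d => U (y.1 (js d j) - y.1 (jf d j)))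
        ((deriv U (x.1 (js d j) - x.1 (jf d j))) • (p1 d (js d j) - p1 d (jf d j))) x := by
    intro j
    have h := ((hU.differentiable hle) (x.1 (js d j) - x.1 (jf d j))).hasDerivAt.comp_hasFDerivAt
      x ((p1 d (js d j) - p1 d (jf d j)).hasFDerivAt)
    simpa [Function.comp_def] using h
  have hs1 := HasFDerivAt.fun_sum (fun i (_ : i ∈ Finset.univ) => h1 i)
  have hs2 := HasFDerivAt.fun_sum (fun j (_ : j ∈ Finset.univ) => h2 j)
  exact hs1.add hs2

noncomputable def g (V U : ℝ → ℝ) (i : Fin d) (x : E d) : ℝ :=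
  deriv V (x.1 i) + ∑ j : Fin (d - 1), deriv U (x.1 (js d j) - x.1 (jf d j)) *
    ((if js d j = i then (1 : ℝ) else 0) - (if jf d j = i then (1 : ℝ) else 0))

lemma Lham_ez (x : E d) (i : Fin d) : Lham V U x (ez d i) = g V U i x := by
  simp [Lham, ez, g, Pi.single_apply, Finset.sum_ite_eq', mul_comm]

lemma drift_eq (hV : ContDiff ℝ (⊤ : ℕ∞) V) (hU : ContDiff ℝ (⊤ : ℕ∞) U)
    (γ₁ γd : ℝ) :
    drift d γ₁ γd V U = fun x => (x.2, fun i =>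
      -(g V U i x) - (if i.1 = 0 then γ₁ * x.2 i else 0) -
        (if i.1 = d - 1 then γd * x.2 i else 0)) := by
  funext x
  unfold drift
  rw [(ham_hasFDerivAt hV hU x).fderiv]
  simp only [Lham_ez]

noncomputable def Lg (V U : ℝ → ℝ) (i : Fin d) (x : E d) : E d →L[ℝ] ℝ :=
  (deriv (deriv V) (x.1 i)) • p1 d i +
    ∑ j : Fin (d - 1),
      (((if js d j = i then (1 : ℝ) else 0) - (if jf d j = i then (1 : ℝ) else 0)) *
          deriv (deriv U) (x.1 (js d j) - x.1 (jf d j))) •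
        (p1 d (js d j) - p1 d (jf d j))

lemma contDiff_deriv {f : ℝ → ℝ} (hf : ContDiff ℝ (⊤ : ℕ∞) f) :
    ContDiff ℝ (⊤ : ℕ∞) (deriv f) := by
  have := hf.iterate_deriv 1
  simpa using this

lemma g_hasFDerivAt (hV : ContDiff ℝ (⊤ : ℕ∞) V) (hU : ContDiff ℝ (⊤ : ℕ∞) U)
    (i : Fin d) (x : E d) : HasFDerivAt (g V U i) (Lg V U i x) x := by
  have ha : HasFDerivAt (fun y : E d => deriv V (y.1 i))
      ((deriv (deriv V) (x.1 i)) • p1 d i) x := by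
    have h := (((contDiff_deriv hV).differentiable hle) (x.1 i)).hasDerivAt.comp_hasFDerivAt x
      (p1 d i).hasFDerivAt
    simpa [Function.comp_def] using h
  have hb : ∀ j : Fin (d - 1),
      HasFDerivAt (fun y : E d => deriv U (y.1 (js d j) - y.1 (jf d j)) *
          ((if js d j = i then (1 : ℝ) else 0) - (if jf d j = i then (1 : ℝ) else 0)))
        ((((if js d j = i then (1 : ℝ) else 0) - (if jf d j = i then (1 : ℝ) else 0)) *
            deriv (deriv U) (x.1 (js d j) - x.1 (jf d j))) •
          (p1 d (js d j) - p1 d (jf d j))) x := by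
    intro j
    have h := ((((contDiff_deriv hU).differentiable hle)
        (x.1 (js d j) - x.1 (jf d j))).hasDerivAt.comp_hasFDerivAt x
      ((p1 d (js d j) - p1 d (jf d j)).hasFDerivAt)).mul_const
      ((if js d j = i then (1 : ℝ) else 0) - (if jf d j = i then (1 : ℝ) else 0))
    simpa [Function.comp_def, smul_smul, mul_comm] using h
  exact ha.add (HasFDerivAt.fun_sum (fun j (_ : j ∈ Finset.univ) => hb j))

noncomputable def Ldrift (γ₁ γd : ℝ) (V U : ℝ → ℝ) (x : E d) : E d →L[ℝ] E d :=
  (snd ℝ (Fin d → ℝ) (Fin d → ℝ)).prod (pi fun i =>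
    -(Lg V U i x) - (if i.1 = 0 then γ₁ • p2 d i else 0) -
      (if i.1 = d - 1 then γd • p2 d i else 0))

lemma drift_hasFDerivAt (hV : ContDiff ℝ (⊤ : ℕ∞) V) (hU : ContDiff ℝ (⊤ : ℕ∞) U)
    (γ₁ γd : ℝ) (x : E d) :
    HasFDerivAt (drift d γ₁ γd V U) (Ldrift γ₁ γd V U x) x := by
  rw [drift_eq hV hU γ₁ γd]
  apply HasFDerivAt.prodMk
  · exact (snd ℝ (Fin d → ℝ) (Fin d → ℝ)).hasFDerivAt
  · apply hasFDerivAt_pi.2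
    intro i
    have h1 : HasFDerivAt (fun y : E d => if i.1 = 0 then γ₁ * y.2 i else 0)
        (if i.1 = 0 then γ₁ • p2 d i else 0) x := by
      split_ifs
      · exact (p2 d i).hasFDerivAt.const_mul γ₁
      · exact hasFDerivAt_const 0 x
    have h2 : HasFDerivAt (fun y : E d => if i.1 = d - 1 then γd * y.2 i else 0)
        (if i.1 = d - 1 then γd • p2 d i else 0) x := by
      split_ifs
      · exact (p2 d i).hasFDerivAt.const_mul γd
      · exact hasFDerivAt_const 0 x
    exact ((g_hasFDerivAt hV hU i x).neg.sub h1).sub h2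

end Stmt11Aux


set_option maxRecDepth 8000 in
theorem stmt11 (d : ℕ) (hd : 3 ≤ d) (γ₁ γd : ℝ) (V U : ℝ → ℝ)
    (hV : ContDiff ℝ (⊤ : ℕ∞) V) (hU : ContDiff ℝ (⊤ : ℕ∞) U) :
    ∀ x : E d,
      UU d (drift d γ₁ γd V U) (eu d ⟨0, by omega⟩) 2 x =
        deriv (deriv U) (x.1 ⟨1, by omega⟩ - x.1 ⟨0, by omega⟩) • eu d ⟨1, by omega⟩ +
          (γ₁ ^ 2 - deriv (deriv V) (x.1 ⟨0, by omega⟩) -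
              deriv (deriv U) (x.1 ⟨1, by omega⟩ - x.1 ⟨0, by omega⟩)) • eu d ⟨0, by omega⟩ -
          γ₁ • ez d ⟨0, by omega⟩ := by
  intro x
  have h0 : 0 < d := by omega
  have h1 : 1 < d := by omega
  set z0 : Fin d := ⟨0, h0⟩ with hz0
  set z1 : Fin d := ⟨1, h1⟩ with hz1
  have hv0 : z0.1 = 0 := rfl
  have hv1 : z1.1 = 1 := rfl
  have hb := Stmt11Aux.drift_hasFDerivAt (d := d) hV hU γ₁ γd
  set cc : E d := (Pi.single z0 (1 : ℝ), fun i : Fin d => if i.1 = 0 then -γ₁ else 0)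
    with hcc
  have hcc1 : ∀ k : Fin d, cc.1 k = if k = z0 then (1 : ℝ) else 0 := by
    intro k
    show (Pi.single z0 (1 : ℝ) : Fin d → ℝ) k = _
    rw [Pi.single_apply]
  have hcc2 : ∀ k : Fin d, cc.2 k = if k.1 = 0 then -γ₁ else 0 := fun k => rfl
  have key1 : ∀ y : E d, Stmt11Aux.Ldrift γ₁ γd V U y (eu d z0) = cc := by
    intro y
    refine Prod.ext ?_ ?_
    · simp [Stmt11Aux.Ldrift, eu, hcc]
    · funext i
      show (-(Stmt11Aux.Lg V U i y) - (if i.1 = 0 then γ₁ • Stmt11Aux.p2 d i else 0) -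
        (if i.1 = d - 1 then γd • Stmt11Aux.p2 d i else 0)) (eu d z0) = cc.2 i
      have hLg : Stmt11Aux.Lg V U i y (eu d z0) = 0 := by
        simp [Stmt11Aux.Lg, eu]
      rw [ContinuousLinearMap.sub_apply, ContinuousLinearMap.sub_apply,
        ContinuousLinearMap.neg_apply, hLg, hcc2 i]
      by_cases hi : i.1 = 0
      · have hid : ¬ i.1 = d - 1 := by omega
        have hie : i = z0 := Fin.ext hi
        rw [if_pos hi, if_pos hi, if_neg hid, hie]
        simp [eu]
      · rw [if_neg hi, if_neg hi]
        have hne : ¬ i = z0 := fun h => hi (by rw [h])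
        by_cases hid : i.1 = d - 1
        · rw [if_pos hid]
          simp [eu, Pi.single_eq_of_ne hne]
        · rw [if_neg hid]; simp
  have hUU1 : UU d (drift d γ₁ γd V U) (eu d z0) 1 = fun _ => cc := by
    funext y
    show lie d (fun _ => eu d z0) (drift d γ₁ γd V U) y = cc
    unfold lie
    rw [(hb y).fderiv]
    simp [key1 y]
  show lie d (UU d (drift d γ₁ γd V U) (eu d z0) 1) (drift d γ₁ γd V U) x = _
  rw [hUU1]
  unfold lie
  rw [(hb x).fderiv]
  simp only [fderiv_fun_const, Pi.zero_apply, ContinuousLinearMap.zero_apply, sub_zero]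
  have hsum : ∀ i : Fin d,
      (∑ j : Fin (d - 1),
        ((((if Stmt11Aux.js d j = i then (1 : ℝ) else 0) -
            (if Stmt11Aux.jf d j = i then (1 : ℝ) else 0)) *
          deriv (deriv U) (x.1 (Stmt11Aux.js d j) - x.1 (Stmt11Aux.jf d j))) •
          (Stmt11Aux.p1 d (Stmt11Aux.js d j) - Stmt11Aux.p1 d (Stmt11Aux.jf d j))) cc) =
      -(((if z1 = i then (1 : ℝ) else 0) - (if z0 = i then (1 : ℝ) else 0)) *
          deriv (deriv U) (x.1 z1 - x.1 z0)) := by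
    intro i
    have hd1 : 0 < d - 1 := by omega
    rw [Finset.sum_eq_single (⟨0, hd1⟩ : Fin (d - 1))]
    · have hjs : Stmt11Aux.js d (⟨0, hd1⟩ : Fin (d - 1)) = z1 := rfl
      have hjf : Stmt11Aux.jf d (⟨0, hd1⟩ : Fin (d - 1)) = z0 := rfl
      rw [hjs, hjf, ContinuousLinearMap.smul_apply, ContinuousLinearMap.sub_apply,
        Stmt11Aux.p1_apply, Stmt11Aux.p1_apply, smul_eq_mul, hcc1 z1, hcc1 z0]
      have hne : ¬ z1 = z0 := fun h => by
        have := congrArg Fin.val h; rw [hv0, hv1] at this; exact one_ne_zero this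
      rw [if_neg hne, if_pos rfl]
      ring
    · intro j _ hj
      have hjs : ¬ Stmt11Aux.js d j = z0 := fun h => by
        have := congrArg Fin.val h; rw [hv0] at this
        exact Nat.succ_ne_zero _ this
      have hjf : ¬ Stmt11Aux.jf d j = z0 := fun h => by
        have := congrArg Fin.val h; rw [hv0] at this
        exact hj (Fin.ext this)
      rw [ContinuousLinearMap.smul_apply, ContinuousLinearMap.sub_apply,
        Stmt11Aux.p1_apply, Stmt11Aux.p1_apply, smul_eq_mul,
        hcc1 (Stmt11Aux.js d j), hcc1 (Stmt11Aux.jf d j), if_neg hjs, if_neg hjf]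
      ring
    · intro h; exact absurd (Finset.mem_univ _) h
  refine Prod.ext ?_ ?_
  · show cc.2 = _
    funext i
    have : (deriv (deriv U) (x.1 z1 - x.1 z0) • eu d z1 +
        (γ₁ ^ 2 - deriv (deriv V) (x.1 z0) - deriv (deriv U) (x.1 z1 - x.1 z0)) • eu d z0 -
        γ₁ • ez d z0).1 i = -(γ₁ • (Pi.single z0 (1:ℝ) : Fin d → ℝ) i) := by
      simp [eu, ez]
    rw [this, hcc2 i]
    by_cases hi : i.1 = 0
    · have hie : i = z0 := Fin.ext hi
      rw [if_pos hi, hie, Pi.single_eq_same]; simp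
    · have hne : ¬ i = z0 := fun h => hi (by rw [h])
      rw [if_neg hi, Pi.single_eq_of_ne hne]; simp
  · funext i
    show (-(Stmt11Aux.Lg V U i x) - (if i.1 = 0 then γ₁ • Stmt11Aux.p2 d i else 0) -
      (if i.1 = d - 1 then γd • Stmt11Aux.p2 d i else 0)) cc = _
    have hLg : Stmt11Aux.Lg V U i x cc =
        deriv (deriv V) (x.1 i) * (if i = z0 then (1 : ℝ) else 0) +
          -(((if z1 = i then (1 : ℝ) else 0) - (if z0 = i then (1 : ℝ) else 0)) *
            deriv (deriv U) (x.1 z1 - x.1 z0)) := by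
      rw [Stmt11Aux.Lg, ContinuousLinearMap.add_apply, ContinuousLinearMap.sum_apply,
        hsum i, ContinuousLinearMap.smul_apply, Stmt11Aux.p1_apply, smul_eq_mul, hcc1 i]
    have hrhs : (deriv (deriv U) (x.1 z1 - x.1 z0) • eu d z1 +
          (γ₁ ^ 2 - deriv (deriv V) (x.1 z0) - deriv (deriv U) (x.1 z1 - x.1 z0)) • eu d z0 -
          γ₁ • ez d z0).2 i =
        deriv (deriv U) (x.1 z1 - x.1 z0) * (if i = z1 then (1:ℝ) else 0) +
          (γ₁ ^ 2 - deriv (deriv V) (x.1 z0) - deriv (deriv U) (x.1 z1 - x.1 z0)) *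
            (if i = z0 then (1:ℝ) else 0) := by
      simp [eu, ez, Pi.single_apply]
    rw [ContinuousLinearMap.sub_apply, ContinuousLinearMap.sub_apply,
      ContinuousLinearMap.neg_apply, hLg, hrhs]
    by_cases hi0 : i.1 = 0
    · have hie : i = z0 := Fin.ext hi0
      have hid : ¬ i.1 = d - 1 := by omega
      have hne1 : ¬ i = z1 := fun h => by
        have := congrArg Fin.val h; rw [hv1] at this; rw [hi0] at this; exact one_ne_zero this.symm
      have hne1' : ¬ z1 = i := fun h => hne1 h.symm
      rw [if_pos hie, if_pos hi0, if_neg hid, if_neg hne1, if_neg hne1',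
        if_pos (hie.symm), ContinuousLinearMap.smul_apply, Stmt11Aux.p2_apply,
        hcc2 i, if_pos hi0, hie]
      simp only [ContinuousLinearMap.zero_apply, smul_eq_mul]
      ring
    · by_cases hi1 : i.1 = 1
      · have hie : i = z1 := Fin.ext hi1
        have hid : ¬ i.1 = d - 1 := by omega
        have hne0 : ¬ i = z0 := fun h => hi0 (by rw [h])
        have hne0' : ¬ z0 = i := fun h => hne0 h.symm
        rw [if_neg hne0, if_neg hi0, if_neg hid, if_pos hie, if_pos hie.symm, if_neg hne0']
        simp only [ContinuousLinearMap.zero_apply, smul_eq_mul]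
        ring
      · have hne0 : ¬ i = z0 := fun h => hi0 (by rw [h])
        have hne1 : ¬ i = z1 := fun h => hi1 (by rw [h])
        have hne0' : ¬ z0 = i := fun h => hne0 h.symm
        have hne1' : ¬ z1 = i := fun h => hne1 h.symm
        rw [if_neg hne0, if_neg hi0, if_neg hne1, if_neg hne1', if_neg hne0']
        by_cases hid : i.1 = d - 1
        · rw [if_pos hid, ContinuousLinearMap.smul_apply, Stmt11Aux.p2_apply,
            hcc2 i, if_neg hi0]
          simp only [ContinuousLinearMap.zero_apply, smul_eq_mul]
          ring
        · rw [if_neg hid]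
          simp only [ContinuousLinearMap.zero_apply, smul_eq_mul]
          ring
end
end

section
/- For every k with 1 ≤ k ≤ d−2, there exist C^∞ functions f_{k,i}, g_{k,i}, f̃_{k,i}, g̃_{k,i} (1 ≤ i ≤ k) and h_k on ℝ^{2d} such that for all x = (z,u) ∈ ℝ^{2d}: 𝒰_{2k}(x) = (Π_{j=1}^{k} U''(z_{j+1}−z_j)) e_{u_{k+1}} + Σ_{i=1}^{k} (f_{k,i}(x) e_{z_i} + g_{k,i}(x) e_{u_i}) and 𝒰_{2k+1}(x) = (Π_{j=1}^{k} U''(z_{j+1}−z_j)) e_{z_{k+1}} + Σ_{i=1}^{k} (f̃_{k,i}(x) e_{z_i} + g̃_{k,i}(x) e_{u_i}) + h_k(x) e_{u_{k+1}}. -/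
open scoped BigOperators

noncomputable section

namespace Stmt13

variable (d : ℕ) (γ₁ γd : ℝ) (V U : ℝ → ℝ)

def sI (i : Fin (d-1)) : Fin d := ⟨i.1+1, by have := i.2; omega⟩
def lI (i : Fin (d-1)) : Fin d := ⟨i.1, by have := i.2; omega⟩

noncomputable def pz (i : Fin d) : E d →L[ℝ] ℝ :=
  (ContinuousLinearMap.proj i).comp (ContinuousLinearMap.fst ℝ (Fin d → ℝ) (Fin d → ℝ))

noncomputable def pu (i : Fin d) : E d →L[ℝ] ℝ :=
  (ContinuousLinearMap.proj i).comp (ContinuousLinearMap.snd ℝ (Fin d → ℝ) (Fin d → ℝ))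

@[simp] lemma pz_apply (i : Fin d) (x : E d) : pz d i x = x.1 i := rfl
@[simp] lemma pu_apply (i : Fin d) (x : E d) : pu d i x = x.2 i := rfl

noncomputable def Lham (x : E d) : E d →L[ℝ] ℝ :=
  (∑ i : Fin d, ((x.2 i) • pu d i + deriv V (x.1 i) • pz d i)) +
  ∑ i : Fin (d-1), deriv U (x.1 (sI d i) - x.1 (lI d i)) • (pz d (sI d i) - pz d (lI d i))

variable {V U}

lemma ham_hasFDerivAt (hV : ContDiff ℝ (⊤:ℕ∞) V) (hU : ContDiff ℝ (⊤:ℕ∞) U) (x : E d) :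
    HasFDerivAt (ham d V U) (Lham d V U x) x := by
  have e : ham d V U = fun y : E d =>
      (∑ i : Fin d, ((y.2 i)^2/2 + V (y.1 i))) +
      ∑ i : Fin (d-1), U (y.1 (sI d i) - y.1 (lI d i)) := rfl
  rw [e]
  apply HasFDerivAt.add
  · apply HasFDerivAt.fun_sum
    intro i _
    apply HasFDerivAt.add
    · have hs : HasDerivAt (fun t : ℝ => t^2/2) (x.2 i) (x.2 i) := by
        have := (hasDerivAt_pow 2 (x.2 i)).div_const 2
        simpa using this
      exact HasDerivAt.comp_hasFDerivAt x hs (pu d i).hasFDerivAt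
    · have hs : HasDerivAt V (deriv V (x.1 i)) (x.1 i) :=
        (hV.differentiable (by norm_cast) (x.1 i)).hasDerivAt
      exact HasDerivAt.comp_hasFDerivAt x hs (pz d i).hasFDerivAt
  · apply HasFDerivAt.fun_sum
    intro i _
    have hs : HasDerivAt U (deriv U (x.1 (sI d i) - x.1 (lI d i))) (x.1 (sI d i) - x.1 (lI d i)) :=
      (hU.differentiable (by norm_cast) _).hasDerivAt
    exact HasDerivAt.comp_hasFDerivAt x hs ((pz d (sI d i)).hasFDerivAt.sub (pz d (lI d i)).hasFDerivAt)

lemma fderiv_ham (hV : ContDiff ℝ (⊤:ℕ∞) V) (hU : ContDiff ℝ (⊤:ℕ∞) U) (x : E d) :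
    fderiv ℝ (ham d V U) x = Lham d V U x := (ham_hasFDerivAt d hV hU x).fderiv

variable (V U)

/-- gradient component -/
noncomputable def Gz (j : Fin d) (x : E d) : ℝ :=
  deriv V (x.1 j) + ∑ i : Fin (d-1), deriv U (x.1 (sI d i) - x.1 (lI d i)) *
    ((if sI d i = j then 1 else 0) - (if lI d i = j then 1 else 0))

variable {V U}

lemma Lham_apply_ez (x : E d) (j : Fin d) : Lham d V U x (ez d j) = Gz d V U j x := by
  simp only [Lham, Gz, ContinuousLinearMap.add_apply, ContinuousLinearMap.coe_sum',
    Finset.sum_apply, ContinuousLinearMap.add_apply, ContinuousLinearMap.smul_apply,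
    ContinuousLinearMap.sub_apply, pz_apply, pu_apply, ez]
  simp [Pi.single_apply, mul_ite, Finset.sum_ite_eq']

variable (V U)

noncomputable def B (x : E d) : E d :=
  (x.2, fun j => -(Gz d V U j x) - (if j.1 = 0 then γ₁ * x.2 j else 0) -
    (if j.1 = d - 1 then γd * x.2 j else 0))

variable {V U}

lemma drift_eq (hV : ContDiff ℝ (⊤:ℕ∞) V) (hU : ContDiff ℝ (⊤:ℕ∞) U) :
    drift d γ₁ γd V U = B d γ₁ γd V U := by
  funext x
  simp only [drift, B, fderiv_ham d hV hU, Lham_apply_ez]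


variable (V U)

noncomputable def DGz (j : Fin d) (x : E d) : E d →L[ℝ] ℝ :=
  deriv (deriv V) (x.1 j) • pz d j + ∑ i : Fin (d-1),
    (deriv (deriv U) (x.1 (sI d i) - x.1 (lI d i)) *
      ((if sI d i = j then 1 else 0) - (if lI d i = j then 1 else 0))) •
      (pz d (sI d i) - pz d (lI d i))

variable {V U}

lemma deriv_contDiff (hV : ContDiff ℝ (⊤:ℕ∞) V) : ContDiff ℝ (⊤:ℕ∞) (deriv V) :=
  (contDiff_infty_iff_deriv.mp hV).2

lemma Gz_hasFDerivAt (hV : ContDiff ℝ (⊤:ℕ∞) V) (hU : ContDiff ℝ (⊤:ℕ∞) U) (j : Fin d)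
    (x : E d) : HasFDerivAt (Gz d V U j) (DGz d V U j x) x := by
  apply HasFDerivAt.add
  · have hs : HasDerivAt (deriv V) (deriv (deriv V) (x.1 j)) (x.1 j) :=
      ((deriv_contDiff hV).differentiable (by norm_cast) _).hasDerivAt
    exact HasDerivAt.comp_hasFDerivAt x hs (pz d j).hasFDerivAt
  · apply HasFDerivAt.fun_sum
    intro i _
    have hs : HasDerivAt (deriv U) (deriv (deriv U) (x.1 (sI d i) - x.1 (lI d i)))
        (x.1 (sI d i) - x.1 (lI d i)) :=
      ((deriv_contDiff hU).differentiable (by norm_cast) _).hasDerivAt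
    have h1 := (HasDerivAt.comp_hasFDerivAt x hs
      ((pz d (sI d i)).hasFDerivAt.sub (pz d (lI d i)).hasFDerivAt)).mul_const
      ((if sI d i = j then (1:ℝ) else 0) - (if lI d i = j then 1 else 0))
    rw [smul_smul, mul_comm] at h1
    exact h1

variable (V U)

noncomputable def DB (x : E d) : E d →L[ℝ] E d :=
  (ContinuousLinearMap.snd ℝ (Fin d → ℝ) (Fin d → ℝ)).prod
    (ContinuousLinearMap.pi fun j => -(DGz d V U j x) -
      (if j.1 = 0 then γ₁ • pu d j else 0) - (if j.1 = d - 1 then γd • pu d j else 0))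

noncomputable def Dval (j : Fin d) (x : E d) (w : E d) : ℝ :=
  -(deriv (deriv V) (x.1 j) * w.1 j + ∑ i : Fin (d-1),
      deriv (deriv U) (x.1 (sI d i) - x.1 (lI d i)) *
        ((if sI d i = j then 1 else 0) - (if lI d i = j then 1 else 0)) *
        (w.1 (sI d i) - w.1 (lI d i)))
  - (if j.1 = 0 then γ₁ * w.2 j else 0) - (if j.1 = d - 1 then γd * w.2 j else 0)

variable {V U}

lemma B_hasFDerivAt (hV : ContDiff ℝ (⊤:ℕ∞) V) (hU : ContDiff ℝ (⊤:ℕ∞) U) (x : E d) :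
    HasFDerivAt (B d γ₁ γd V U) (DB d γ₁ γd V U x) x := by
  apply HasFDerivAt.prodMk
  · exact (ContinuousLinearMap.snd ℝ (Fin d → ℝ) (Fin d → ℝ)).hasFDerivAt
  · rw [hasFDerivAt_pi']
    intro j
    have e : (ContinuousLinearMap.proj j).comp (ContinuousLinearMap.pi fun j =>
        -(DGz d V U j x) - (if j.1 = 0 then γ₁ • pu d j else 0) -
          (if j.1 = d - 1 then γd • pu d j else 0)) =
        -(DGz d V U j x) - (if j.1 = 0 then γ₁ • pu d j else 0) -
          (if j.1 = d - 1 then γd • pu d j else 0) :=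
      ContinuousLinearMap.proj_pi _ _
    rw [e]
    apply HasFDerivAt.sub
    apply HasFDerivAt.sub
    · exact (Gz_hasFDerivAt d hV hU j x).neg
    · by_cases hj : j.1 = 0 <;> simp only [hj, if_true, if_false, reduceIte]
      · exact (pu d j).hasFDerivAt.const_mul γ₁
      · exact hasFDerivAt_const 0 x
    · by_cases hj : j.1 = d - 1 <;> simp only [hj, if_true, if_false, reduceIte]
      · exact (pu d j).hasFDerivAt.const_mul γd
      · exact hasFDerivAt_const 0 x

lemma DB_apply (x w : E d) :
    DB d γ₁ γd V U x w = (w.2, fun j => Dval d γ₁ γd V U j x w) := by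
  simp only [DB, Dval, DGz, ContinuousLinearMap.prod_apply, ContinuousLinearMap.coe_snd']
  refine Prod.ext rfl ?_
  funext j
  simp only [ContinuousLinearMap.pi_apply, ContinuousLinearMap.sub_apply,
    ContinuousLinearMap.neg_apply, ContinuousLinearMap.add_apply,
    ContinuousLinearMap.smul_apply, ContinuousLinearMap.coe_sum', Finset.sum_apply,
    pz_apply, pu_apply, apply_ite (fun L : E d →L[ℝ] ℝ => L w),
    ContinuousLinearMap.zero_apply, smul_eq_mul]

lemma contDiff_coord1 (j : Fin d) : ContDiff ℝ (⊤:ℕ∞) (fun x : E d => x.1 j) := (pz d j).contDiff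
lemma contDiff_coord2 (j : Fin d) : ContDiff ℝ (⊤:ℕ∞) (fun x : E d => x.2 j) := (pu d j).contDiff

lemma contDiff_Gz (hV : ContDiff ℝ (⊤:ℕ∞) V) (hU : ContDiff ℝ (⊤:ℕ∞) U) (j : Fin d) :
    ContDiff ℝ (⊤:ℕ∞) (Gz d V U j) := by
  apply ContDiff.add
  · exact (deriv_contDiff hV).comp (contDiff_coord1 d j)
  · apply ContDiff.sum
    intro i _
    exact (((deriv_contDiff hU).comp ((contDiff_coord1 d (sI d i)).sub
      (contDiff_coord1 d (lI d i)))).mul contDiff_const)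

lemma contDiff_B (hV : ContDiff ℝ (⊤:ℕ∞) V) (hU : ContDiff ℝ (⊤:ℕ∞) U) :
    ContDiff ℝ (⊤:ℕ∞) (B d γ₁ γd V U) := by
  apply ContDiff.prodMk
  · exact contDiff_snd
  · apply contDiff_pi.mpr
    intro j
    apply ContDiff.sub
    apply ContDiff.sub
    · exact (contDiff_Gz d hV hU j).neg
    · by_cases hj : j.1 = 0 <;> simp only [hj, if_true, if_false, reduceIte]
      · exact contDiff_const.mul (contDiff_coord2 d j)
      · exact contDiff_const
    · by_cases hj : j.1 = d - 1 <;> simp only [hj, if_true, if_false, reduceIte]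
      · exact contDiff_const.mul (contDiff_coord2 d j)
      · exact contDiff_const


lemma contDiff_fderiv_apply_B (hV : ContDiff ℝ (⊤:ℕ∞) V) (hU : ContDiff ℝ (⊤:ℕ∞) U)
    (f : E d → ℝ) (hf : ContDiff ℝ (⊤:ℕ∞) f) :
    ContDiff ℝ (⊤:ℕ∞) (fun x => fderiv ℝ f x (B d γ₁ γd V U x)) :=
  (hf.fderiv_right (by norm_cast)).clm_apply (contDiff_B d γ₁ γd hV hU)

lemma contDiff_Dval_comb (hV : ContDiff ℝ (⊤:ℕ∞) V) (hU : ContDiff ℝ (⊤:ℕ∞) U)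
    (j : Fin d) (a c : Fin d → E d → ℝ)
    (ha : ∀ j', ContDiff ℝ (⊤:ℕ∞) (a j')) (hc : ∀ j', ContDiff ℝ (⊤:ℕ∞) (c j')) :
    ContDiff ℝ (⊤:ℕ∞) (fun x =>
      Dval d γ₁ γd V U j x (fun j' => a j' x, fun j' => c j' x)) := by
  unfold Dval
  apply ContDiff.sub
  apply ContDiff.sub
  · apply ContDiff.neg
    apply ContDiff.add
    · exact ((deriv_contDiff (deriv_contDiff hV)).comp (contDiff_coord1 d j)).mul (ha j)
    · apply ContDiff.sum
      intro i _
      exact (((deriv_contDiff (deriv_contDiff hU)).comp ((contDiff_coord1 d (sI d i)).sub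
        (contDiff_coord1 d (lI d i)))).mul contDiff_const).mul ((ha (sI d i)).sub (ha (lI d i)))
  · by_cases hj : j.1 = 0 <;> simp only [hj, if_true, if_false, reduceIte]
    · exact contDiff_const.mul (hc j)
    · exact contDiff_const
  · by_cases hj : j.1 = d - 1 <;> simp only [hj, if_true, if_false, reduceIte]
    · exact contDiff_const.mul (hc j)
    · exact contDiff_const

lemma UU_step (hV : ContDiff ℝ (⊤:ℕ∞) V) (hU : ContDiff ℝ (⊤:ℕ∞) U)
    (v : E d) (n : ℕ) (a c : Fin d → E d → ℝ)
    (ha : ∀ j, ContDiff ℝ (⊤:ℕ∞) (a j)) (hc : ∀ j, ContDiff ℝ (⊤:ℕ∞) (c j))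
    (hX : ∀ x, UU d (drift d γ₁ γd V U) v n x = (fun j => a j x, fun j => c j x)) :
    ∀ x, UU d (drift d γ₁ γd V U) v (n+1) x =
      (fun j => c j x - fderiv ℝ (a j) x (B d γ₁ γd V U x),
       fun j => Dval d γ₁ γd V U j x (fun j' => a j' x, fun j' => c j' x)
         - fderiv ℝ (c j) x (B d γ₁ γd V U x)) := by
  intro x
  have hXf : UU d (drift d γ₁ γd V U) v n =
      fun x => ((fun j => a j x, fun j => c j x) : E d) := funext hX
  have hstep : UU d (drift d γ₁ γd V U) v (n+1) =
      lie d (UU d (drift d γ₁ γd V U) v n) (drift d γ₁ γd V U) := rfl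
  rw [hstep, hXf, lie, drift_eq d γ₁ γd hV hU]
  have h1 : fderiv ℝ (B d γ₁ γd V U) x = DB d γ₁ γd V U x :=
    (B_hasFDerivAt d γ₁ γd hV hU x).fderiv
  have hx2 : HasFDerivAt (fun x : E d => ((fun j => a j x, fun j => c j x) : E d))
      ((ContinuousLinearMap.pi fun j => fderiv ℝ (a j) x).prod
        (ContinuousLinearMap.pi fun j => fderiv ℝ (c j) x)) x := by
    apply HasFDerivAt.prodMk
    · apply hasFDerivAt_pi''
      intro i
      rw [ContinuousLinearMap.proj_pi]
      exact ((ha i).differentiable (by norm_cast) x).hasFDerivAt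
    · apply hasFDerivAt_pi''
      intro i
      rw [ContinuousLinearMap.proj_pi]
      exact ((hc i).differentiable (by norm_cast) x).hasFDerivAt
  rw [hx2.fderiv, h1, DB_apply]
  refine Prod.ext ?_ ?_
  · funext j
    simp [Prod.fst_sub]
  · funext j
    simp [Prod.snd_sub]


variable (U)

noncomputable def P (k : ℕ) (hk : k + 1 ≤ d) (x : E d) : ℝ :=
  ∏ j : Fin k, deriv (deriv U)
    (x.1 ⟨j.1 + 1, by have := j.2; omega⟩ - x.1 ⟨j.1, by have := j.2; omega⟩)

variable {U}

lemma fderiv_zero_fun (x : E d) : fderiv ℝ (0 : E d → ℝ) x = 0 := by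
  have : (0 : E d → ℝ) = fun _ => (0:ℝ) := rfl
  rw [this, fderiv_fun_const]
  rfl

lemma step_even_odd (hV : ContDiff ℝ (⊤:ℕ∞) V) (hU : ContDiff ℝ (⊤:ℕ∞) U)
    (v : E d) (k n : ℕ) (hk : k + 2 ≤ d)
    (a c : Fin d → E d → ℝ)
    (ha : ∀ j, ContDiff ℝ (⊤:ℕ∞) (a j)) (hc : ∀ j, ContDiff ℝ (⊤:ℕ∞) (c j))
    (hsa : ∀ j : Fin d, k ≤ j.1 → a j = 0) (hsc : ∀ j : Fin d, k + 1 ≤ j.1 → c j = 0)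
    (hck : ∀ x, c ⟨k, by omega⟩ x = P d U k (by omega) x)
    (hX : ∀ x, UU d (drift d γ₁ γd V U) v n x = (fun j => a j x, fun j => c j x)) :
    ∃ a' c' : Fin d → E d → ℝ,
      (∀ j, ContDiff ℝ (⊤:ℕ∞) (a' j)) ∧ (∀ j, ContDiff ℝ (⊤:ℕ∞) (c' j)) ∧
      (∀ j : Fin d, k + 1 ≤ j.1 → a' j = 0) ∧ (∀ j : Fin d, k + 1 ≤ j.1 → c' j = 0) ∧
      (∀ x, a' ⟨k, by omega⟩ x = P d U k (by omega) x) ∧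
      (∀ x, UU d (drift d γ₁ γd V U) v (n+1) x = (fun j => a' j x, fun j => c' j x)) := by
  refine ⟨fun j x => c j x - fderiv ℝ (a j) x (B d γ₁ γd V U x),
    fun j x => Dval d γ₁ γd V U j x (fun j' => a j' x, fun j' => c j' x)
      - fderiv ℝ (c j) x (B d γ₁ γd V U x), ?_, ?_, ?_, ?_, ?_, ?_⟩
  · intro j
    exact (hc j).sub (contDiff_fderiv_apply_B d γ₁ γd hV hU _ (ha j))
  · intro j
    exact (contDiff_Dval_comb d γ₁ γd hV hU j a c ha hc).sub
      (contDiff_fderiv_apply_B d γ₁ γd hV hU _ (hc j))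
  · intro j hj
    funext x
    have h1 : c j = 0 := hsc j hj
    have h2 : a j = 0 := hsa j (by omega)
    simp [h1, h2, fderiv_zero_fun]
  · intro j hj
    funext x
    have hax : ∀ j' : Fin d, k ≤ j'.1 → a j' x = 0 := fun j' h => by
      rw [hsa j' h]; rfl
    have hcx : c j x = 0 := by rw [hsc j hj]; rfl
    have h1 : c j = 0 := hsc j hj
    simp only [Dval, h1, fderiv_zero_fun, Pi.zero_apply, sub_zero,
      ContinuousLinearMap.zero_apply]
    have hsum : ∑ i : Fin (d-1), deriv (deriv U) (x.1 (sI d i) - x.1 (lI d i)) *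
        ((if sI d i = j then (1:ℝ) else 0) - (if lI d i = j then 1 else 0)) *
        ((fun j' => a j' x, fun j' => c j' x).1 (sI d i) -
          (fun j' => a j' x, fun j' => c j' x).1 (lI d i)) = 0 := by
      apply Finset.sum_eq_zero
      intro i _
      by_cases e1 : sI d i = j
      · have : i.1 + 1 = j.1 := congrArg Fin.val e1
        have v1 : a (sI d i) x = 0 := hax _ (by simp [sI]; omega)
        have v2 : a (lI d i) x = 0 := hax _ (by simp [lI]; omega)
        simp [v1, v2]
      · by_cases e2 : lI d i = j
        · have : i.1 = j.1 := congrArg Fin.val e2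
          have v1 : a (sI d i) x = 0 := hax _ (by simp [sI]; omega)
          have v2 : a (lI d i) x = 0 := hax _ (by simp [lI]; omega)
          simp [v1, v2]
        · simp [e1, e2]
    rw [hsum]
    simp [hax j (by omega), hcx]
  · intro x
    have h2 : a ⟨k, by omega⟩ = 0 := hsa _ (by simp)
    simp [h2, fderiv_zero_fun, hck x]
  · exact UU_step d γ₁ γd hV hU v n a c ha hc hX

lemma step_odd_even (hV : ContDiff ℝ (⊤:ℕ∞) V) (hU : ContDiff ℝ (⊤:ℕ∞) U)
    (v : E d) (k n : ℕ) (hk : k + 3 ≤ d)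
    (a c : Fin d → E d → ℝ)
    (ha : ∀ j, ContDiff ℝ (⊤:ℕ∞) (a j)) (hc : ∀ j, ContDiff ℝ (⊤:ℕ∞) (c j))
    (hsa : ∀ j : Fin d, k + 1 ≤ j.1 → a j = 0) (hsc : ∀ j : Fin d, k + 1 ≤ j.1 → c j = 0)
    (hak : ∀ x, a ⟨k, by omega⟩ x = P d U k (by omega) x)
    (hX : ∀ x, UU d (drift d γ₁ γd V U) v n x = (fun j => a j x, fun j => c j x)) :
    ∃ a' c' : Fin d → E d → ℝ,
      (∀ j, ContDiff ℝ (⊤:ℕ∞) (a' j)) ∧ (∀ j, ContDiff ℝ (⊤:ℕ∞) (c' j)) ∧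
      (∀ j : Fin d, k + 1 ≤ j.1 → a' j = 0) ∧ (∀ j : Fin d, k + 2 ≤ j.1 → c' j = 0) ∧
      (∀ x, c' ⟨k + 1, by omega⟩ x = P d U (k+1) (by omega) x) ∧
      (∀ x, UU d (drift d γ₁ γd V U) v (n+1) x = (fun j => a' j x, fun j => c' j x)) := by
  refine ⟨fun j x => c j x - fderiv ℝ (a j) x (B d γ₁ γd V U x),
    fun j x => Dval d γ₁ γd V U j x (fun j' => a j' x, fun j' => c j' x)
      - fderiv ℝ (c j) x (B d γ₁ γd V U x), ?_, ?_, ?_, ?_, ?_, ?_⟩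
  · intro j
    exact (hc j).sub (contDiff_fderiv_apply_B d γ₁ γd hV hU _ (ha j))
  · intro j
    exact (contDiff_Dval_comb d γ₁ γd hV hU j a c ha hc).sub
      (contDiff_fderiv_apply_B d γ₁ γd hV hU _ (hc j))
  · intro j hj
    funext x
    have h1 : c j = 0 := hsc j hj
    have h2 : a j = 0 := hsa j hj
    simp [h1, h2, fderiv_zero_fun]
  · intro j hj
    funext x
    have hax : ∀ j' : Fin d, k + 1 ≤ j'.1 → a j' x = 0 := fun j' h => by
      rw [hsa j' h]; rfl
    have hcx : c j x = 0 := by rw [hsc j (by omega)]; rfl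
    have h1 : c j = 0 := hsc j (by omega)
    simp only [Dval, h1, fderiv_zero_fun, Pi.zero_apply, sub_zero,
      ContinuousLinearMap.zero_apply]
    have hsum : ∑ i : Fin (d-1), deriv (deriv U) (x.1 (sI d i) - x.1 (lI d i)) *
        ((if sI d i = j then (1:ℝ) else 0) - (if lI d i = j then 1 else 0)) *
        ((fun j' => a j' x, fun j' => c j' x).1 (sI d i) -
          (fun j' => a j' x, fun j' => c j' x).1 (lI d i)) = 0 := by
      apply Finset.sum_eq_zero
      intro i _
      by_cases e1 : sI d i = j
      · have : i.1 + 1 = j.1 := congrArg Fin.val e1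
        have v1 : a (sI d i) x = 0 := hax _ (by simp [sI]; omega)
        have v2 : a (lI d i) x = 0 := hax _ (by simp [lI]; omega)
        simp [v1, v2]
      · by_cases e2 : lI d i = j
        · have : i.1 = j.1 := congrArg Fin.val e2
          have v1 : a (sI d i) x = 0 := hax _ (by simp [sI]; omega)
          have v2 : a (lI d i) x = 0 := hax _ (by simp [lI]; omega)
          simp [v1, v2]
        · simp [e1, e2]
    rw [hsum]
    simp [hax j (by omega), hcx]
  · intro x
    have h1 : c ⟨k+1, by omega⟩ = 0 := hsc _ (by simp)
    have hax1 : a ⟨k+1, by omega⟩ x = 0 := by rw [hsa _ (by simp)]; rfl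
    simp only [Dval, h1, fderiv_zero_fun, Pi.zero_apply, sub_zero,
      ContinuousLinearMap.zero_apply]
    have hsum : ∑ i : Fin (d-1), deriv (deriv U) (x.1 (sI d i) - x.1 (lI d i)) *
        ((if sI d i = (⟨k+1, by omega⟩ : Fin d) then (1:ℝ) else 0) -
          (if lI d i = (⟨k+1, by omega⟩ : Fin d) then 1 else 0)) *
        ((fun j' => a j' x, fun j' => c j' x).1 (sI d i) -
          (fun j' => a j' x, fun j' => c j' x).1 (lI d i)) =
        - (deriv (deriv U) (x.1 ⟨k+1, by omega⟩ - x.1 ⟨k, by omega⟩) * P d U k (by omega) x) := by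
      rw [Finset.sum_eq_single (⟨k, by omega⟩ : Fin (d-1))]
      · have e1 : sI d ⟨k, by omega⟩ = (⟨k+1, by omega⟩ : Fin d) := rfl
        have e2 : lI d ⟨k, by omega⟩ = (⟨k, by omega⟩ : Fin d) := rfl
        have ne2 : lI d ⟨k, by omega⟩ ≠ (⟨k+1, by omega⟩ : Fin d) := by
          simp [lI, Fin.ext_iff]
        simp only [e1, if_pos rfl, if_neg ne2]
        simp [e2, hak x, hax1]
      · intro i _ hne
        by_cases e1 : sI d i = (⟨k+1, by omega⟩ : Fin d)
        · exfalso
          apply hne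
          have hik : i.1 + 1 = k + 1 := congrArg Fin.val e1
          exact Fin.ext (by simp; omega)
        · by_cases e2 : lI d i = (⟨k+1, by omega⟩ : Fin d)
          · have : i.1 = k + 1 := congrArg Fin.val e2
            have hax : ∀ j' : Fin d, k + 1 ≤ j'.1 → a j' x = 0 := fun j' h => by
              rw [hsa j' h]; rfl
            have v1 : a (sI d i) x = 0 := hax _ (by simp [sI]; omega)
            have v2 : a (lI d i) x = 0 := hax _ (by simp [lI]; omega)
            simp [v1, v2]
          · simp [e1, e2]
      · intro hmem
        exact absurd (Finset.mem_univ _) hmem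
    rw [hsum]
    have hc1x : c ⟨k+1, by omega⟩ x = 0 := by rw [h1]; rfl
    have hP : P d U (k+1) (by omega) x =
        P d U k (by omega) x * deriv (deriv U) (x.1 ⟨k+1, by omega⟩ - x.1 ⟨k, by omega⟩) := by
      rw [P, Fin.prod_univ_castSucc]
      rfl
    simp only [hax1, hc1x, hP]
    simp
    ring
  · exact UU_step d γ₁ γd hV hU v n a c ha hc hX


lemma main_ind (hd : 3 ≤ d) (hV : ContDiff ℝ (⊤:ℕ∞) V) (hU : ContDiff ℝ (⊤:ℕ∞) U) :
    ∀ k : ℕ, ∀ hkd : k ≤ d - 2,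
    ((∃ a c : Fin d → E d → ℝ,
      (∀ j, ContDiff ℝ (⊤:ℕ∞) (a j)) ∧ (∀ j, ContDiff ℝ (⊤:ℕ∞) (c j)) ∧
      (∀ j : Fin d, k ≤ j.1 → a j = 0) ∧ (∀ j : Fin d, k + 1 ≤ j.1 → c j = 0) ∧
      (∀ x, c ⟨k, Nat.lt_of_le_of_lt hkd (by omega)⟩ x = P d U k (by omega) x) ∧
      (∀ x, UU d (drift d γ₁ γd V U) (eu d ⟨0, by linarith⟩) (2*k) x =
        (fun j => a j x, fun j => c j x))) ∧
    (∃ a c : Fin d → E d → ℝ,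
      (∀ j, ContDiff ℝ (⊤:ℕ∞) (a j)) ∧ (∀ j, ContDiff ℝ (⊤:ℕ∞) (c j)) ∧
      (∀ j : Fin d, k + 1 ≤ j.1 → a j = 0) ∧ (∀ j : Fin d, k + 1 ≤ j.1 → c j = 0) ∧
      (∀ x, a ⟨k, Nat.lt_of_le_of_lt hkd (by omega)⟩ x = P d U k (by omega) x) ∧
      (∀ x, UU d (drift d γ₁ γd V U) (eu d ⟨0, by linarith⟩) (2*k+1) x =
        (fun j => a j x, fun j => c j x)))) := by
  intro k
  induction k with
  | zero =>
    intro hkd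
    have heven : ∃ a c : Fin d → E d → ℝ,
        (∀ j, ContDiff ℝ (⊤:ℕ∞) (a j)) ∧ (∀ j, ContDiff ℝ (⊤:ℕ∞) (c j)) ∧
        (∀ j : Fin d, 0 ≤ j.1 → a j = 0) ∧ (∀ j : Fin d, 0 + 1 ≤ j.1 → c j = 0) ∧
        (∀ x, c ⟨0, by omega⟩ x = P d U 0 (by omega) x) ∧
        (∀ x, UU d (drift d γ₁ γd V U) (eu d ⟨0, by omega⟩) (2*0) x =
          (fun j => a j x, fun j => c j x)) := by
      refine ⟨fun _ _ => 0, fun j _ => if j.1 = 0 then 1 else 0, ?_, ?_, ?_, ?_, ?_, ?_⟩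
      · intro j; exact contDiff_const
      · intro j
        by_cases hj : j.1 = 0 <;> simp only [hj, if_true, if_false, reduceIte] <;>
          exact contDiff_const
      · intro j _; rfl
      · intro j hj
        funext x
        simp only [Pi.zero_apply]
        rw [if_neg (by omega)]
      · intro x; simp [P]
      · intro x
        have : UU d (drift d γ₁ γd V U) (eu d ⟨0, by omega⟩) 0 x = eu d ⟨0, by omega⟩ := rfl
        rw [this]
        refine Prod.ext rfl ?_
        funext j
        simp only [eu, Pi.single_apply, Fin.ext_iff]
    refine ⟨heven, ?_⟩
    obtain ⟨a, c, ha, hc, hsa, hsc, hck, hX⟩ := heven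
    obtain ⟨a', c', ha', hc', hsa', hsc', hak', hX'⟩ :=
      step_even_odd d γ₁ γd hV hU (eu d ⟨0, by omega⟩) 0 0 (by omega) a c ha hc hsa hsc hck hX
    exact ⟨a', c', ha', hc', hsa', hsc', hak', hX'⟩
  | succ k ih =>
    intro hkd
    obtain ⟨_, a, c, ha, hc, hsa, hsc, hak, hX⟩ := ih (by omega)
    obtain ⟨a', c', ha', hc', hsa', hsc', hck', hX'⟩ :=
      step_odd_even d γ₁ γd hV hU (eu d ⟨0, by omega⟩) k (2*k+1) (by omega) a c ha hc hsa hsc hak hX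
    have heven : ∃ a c : Fin d → E d → ℝ,
        (∀ j, ContDiff ℝ (⊤:ℕ∞) (a j)) ∧ (∀ j, ContDiff ℝ (⊤:ℕ∞) (c j)) ∧
        (∀ j : Fin d, k + 1 ≤ j.1 → a j = 0) ∧ (∀ j : Fin d, k + 1 + 1 ≤ j.1 → c j = 0) ∧
        (∀ x, c ⟨k + 1, by omega⟩ x = P d U (k+1) (by omega) x) ∧
        (∀ x, UU d (drift d γ₁ γd V U) (eu d ⟨0, by omega⟩) (2*(k+1)) x =
          (fun j => a j x, fun j => c j x)) :=
      ⟨a', c', ha', hc', hsa', fun j hj => hsc' j (by omega), hck', hX'⟩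
    refine ⟨heven, ?_⟩
    obtain ⟨a2, c2, ha2, hc2, hsa2, hsc2, hck2, hX2⟩ := heven
    obtain ⟨a3, c3, ha3, hc3, hsa3, hsc3, hak3, hX3⟩ :=
      step_even_odd d γ₁ γd hV hU (eu d ⟨0, by omega⟩) (k+1) (2*(k+1)) (by omega)
        a2 c2 ha2 hc2 hsa2 hsc2 hck2 hX2
    exact ⟨a3, c3, ha3, hc3, hsa3, hsc3, hak3, hX3⟩


lemma sum_single_pi (k : ℕ) (hk : k ≤ d) (w : Fin k → ℝ) (j : Fin d) :
    (∑ i : Fin k, w i * (if (⟨i.1, by have := i.2; omega⟩ : Fin d) = j then (1:ℝ) else 0)) =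
    if h : j.1 < k then w ⟨j.1, h⟩ else 0 := by
  by_cases h : j.1 < k
  · rw [dif_pos h, Finset.sum_eq_single (⟨j.1, h⟩ : Fin k)]
    · rw [if_pos (Fin.ext rfl), mul_one]
    · intro i _ hne
      rw [if_neg, mul_zero]
      intro hcon
      apply hne
      have : i.1 = j.1 := congrArg Fin.val hcon
      exact Fin.ext this
    · intro hmem; exact absurd (Finset.mem_univ _) hmem
  · rw [dif_neg h]
    apply Finset.sum_eq_zero
    intro i _
    rw [if_neg, mul_zero]
    intro hcon
    have : i.1 = j.1 := congrArg Fin.val hcon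
    omega

end Stmt13

open Stmt13 in
theorem stmt13 (d : ℕ) (hd : 3 ≤ d) (γ₁ γd : ℝ) (V U : ℝ → ℝ)
    (hV : ContDiff ℝ (⊤ : ℕ∞) V) (hU : ContDiff ℝ (⊤ : ℕ∞) U)
    (k : ℕ) (hk1 : 1 ≤ k) (hk2 : k ≤ d - 2) :
    ∃ f g ft gt : Fin k → E d → ℝ, ∃ h : E d → ℝ,
      (∀ i, ContDiff ℝ (⊤ : ℕ∞) (f i)) ∧ (∀ i, ContDiff ℝ (⊤ : ℕ∞) (g i)) ∧
      (∀ i, ContDiff ℝ (⊤ : ℕ∞) (ft i)) ∧ (∀ i, ContDiff ℝ (⊤ : ℕ∞) (gt i)) ∧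
      ContDiff ℝ (⊤ : ℕ∞) h ∧
      (∀ x : E d,
        UU d (drift d γ₁ γd V U) (eu d ⟨0, by omega⟩) (2 * k) x =
          (∏ j : Fin k, deriv (deriv U)
              (x.1 ⟨j.1 + 1, by have := j.2; omega⟩ - x.1 ⟨j.1, by have := j.2; omega⟩)) •
            eu d ⟨k, by omega⟩ +
          ∑ i : Fin k, (f i x • ez d ⟨i.1, by have := i.2; omega⟩ +
            g i x • eu d ⟨i.1, by have := i.2; omega⟩)) ∧
      (∀ x : E d,
        UU d (drift d γ₁ γd V U) (eu d ⟨0, by omega⟩) (2 * k + 1) x =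
          (∏ j : Fin k, deriv (deriv U)
              (x.1 ⟨j.1 + 1, by have := j.2; omega⟩ - x.1 ⟨j.1, by have := j.2; omega⟩)) •
            ez d ⟨k, by omega⟩ +
          ∑ i : Fin k, (ft i x • ez d ⟨i.1, by have := i.2; omega⟩ +
            gt i x • eu d ⟨i.1, by have := i.2; omega⟩) +
          h x • eu d ⟨k, by omega⟩) := by
  obtain ⟨⟨a, c, ha, hc, hsa, hsc, hck, hX⟩, ⟨a2, c2, ha2, hc2, hsa2, hsc2, hak2, hX2⟩⟩ :=
    main_ind d γ₁ γd hd hV hU k hk2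
  refine ⟨fun i => a ⟨i.1, by have := i.2; omega⟩, fun i => c ⟨i.1, by have := i.2; omega⟩,
    fun i => a2 ⟨i.1, by have := i.2; omega⟩, fun i => c2 ⟨i.1, by have := i.2; omega⟩,
    c2 ⟨k, by omega⟩,
    fun i => ha _, fun i => hc _, fun i => ha2 _, fun i => hc2 _, hc2 _, ?_, ?_⟩
  · intro x
    rw [hX x]
    refine Prod.ext ?_ ?_
    · funext j
      have hr : ((∏ j : Fin k, deriv (deriv U)
          (x.1 ⟨j.1 + 1, by have := j.2; omega⟩ - x.1 ⟨j.1, by have := j.2; omega⟩)) •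
            eu d ⟨k, by omega⟩ +
          ∑ i : Fin k, ((a ⟨i.1, by have := i.2; omega⟩ x) • ez d ⟨i.1, by have := i.2; omega⟩ +
            (c ⟨i.1, by have := i.2; omega⟩ x) • eu d ⟨i.1, by have := i.2; omega⟩)).1 j =
          ∑ i : Fin k, (a ⟨i.1, by have := i.2; omega⟩ x) *
            (if (⟨i.1, by have := i.2; omega⟩ : Fin d) = j then (1:ℝ) else 0) := by
        simp [eu, ez, Prod.fst_sum, Pi.single_apply, mul_ite, eq_comm]
      rw [hr, sum_single_pi d k (by omega)]
      show a j x = _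
      by_cases h : j.1 < k
      · rw [dif_pos h]
      · rw [dif_neg h]
        have h0 : a j = 0 := hsa j (by omega)
        rw [h0]; rfl
    · funext j
      have hr : ((∏ j : Fin k, deriv (deriv U)
          (x.1 ⟨j.1 + 1, by have := j.2; omega⟩ - x.1 ⟨j.1, by have := j.2; omega⟩)) •
            eu d ⟨k, by omega⟩ +
          ∑ i : Fin k, ((a ⟨i.1, by have := i.2; omega⟩ x) • ez d ⟨i.1, by have := i.2; omega⟩ +
            (c ⟨i.1, by have := i.2; omega⟩ x) • eu d ⟨i.1, by have := i.2; omega⟩)).2 j =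
          (∏ j : Fin k, deriv (deriv U)
            (x.1 ⟨j.1 + 1, by have := j.2; omega⟩ - x.1 ⟨j.1, by have := j.2; omega⟩)) *
            (if (⟨k, by omega⟩ : Fin d) = j then (1:ℝ) else 0) +
          ∑ i : Fin k, (c ⟨i.1, by have := i.2; omega⟩ x) *
            (if (⟨i.1, by have := i.2; omega⟩ : Fin d) = j then (1:ℝ) else 0) := by
        simp [eu, ez, Prod.snd_sum, Pi.single_apply, mul_ite, eq_comm]
      rw [hr, sum_single_pi d k (by omega)]
      show c j x = _
      rcases lt_trichotomy j.1 k with h | h | h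
      · rw [dif_pos h, if_neg (by intro hcon; have hkj : k = j.1 := (by rw [← hcon]); omega),
          mul_zero, zero_add]
      · have hj : j = (⟨k, by omega⟩ : Fin d) := by apply Fin.ext; show j.1 = k; exact h
        rw [dif_neg (by omega), hj, if_pos rfl, hck, mul_one, add_zero]
        rfl
      · rw [dif_neg (by omega), if_neg (by intro hcon; have hkj : k = j.1 := (by rw [← hcon]); omega)]
        have h0 : c j = 0 := hsc j (by omega)
        rw [h0, mul_zero, zero_add]
        rfl
  · intro x
    rw [hX2 x]
    refine Prod.ext ?_ ?_
    · funext j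
      have hr : ((∏ j : Fin k, deriv (deriv U)
          (x.1 ⟨j.1 + 1, by have := j.2; omega⟩ - x.1 ⟨j.1, by have := j.2; omega⟩)) •
            ez d ⟨k, by omega⟩ +
          ∑ i : Fin k, ((a2 ⟨i.1, by have := i.2; omega⟩ x) • ez d ⟨i.1, by have := i.2; omega⟩ +
            (c2 ⟨i.1, by have := i.2; omega⟩ x) • eu d ⟨i.1, by have := i.2; omega⟩) +
          (c2 ⟨k, by omega⟩ x) • eu d ⟨k, by omega⟩).1 j =
          (∏ j : Fin k, deriv (deriv U)
            (x.1 ⟨j.1 + 1, by have := j.2; omega⟩ - x.1 ⟨j.1, by have := j.2; omega⟩)) *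
            (if (⟨k, by omega⟩ : Fin d) = j then (1:ℝ) else 0) +
          ∑ i : Fin k, (a2 ⟨i.1, by have := i.2; omega⟩ x) *
            (if (⟨i.1, by have := i.2; omega⟩ : Fin d) = j then (1:ℝ) else 0) := by
        simp [eu, ez, Prod.fst_sum, Pi.single_apply, mul_ite, eq_comm]
      rw [hr, sum_single_pi d k (by omega)]
      show a2 j x = _
      rcases lt_trichotomy j.1 k with h | h | h
      · rw [dif_pos h, if_neg (by intro hcon; have hkj : k = j.1 := (by rw [← hcon]); omega),
          mul_zero, zero_add]
      · have hj : j = (⟨k, by omega⟩ : Fin d) := by apply Fin.ext; show j.1 = k; exact h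
        rw [dif_neg (by omega), hj, if_pos rfl, hak2, mul_one, add_zero]
        rfl
      · rw [dif_neg (by omega), if_neg (by intro hcon; have hkj : k = j.1 := (by rw [← hcon]); omega)]
        have h0 : a2 j = 0 := hsa2 j (by omega)
        rw [h0, mul_zero, zero_add]
        rfl
    · funext j
      have hr : ((∏ j : Fin k, deriv (deriv U)
          (x.1 ⟨j.1 + 1, by have := j.2; omega⟩ - x.1 ⟨j.1, by have := j.2; omega⟩)) •
            ez d ⟨k, by omega⟩ +
          ∑ i : Fin k, ((a2 ⟨i.1, by have := i.2; omega⟩ x) • ez d ⟨i.1, by have := i.2; omega⟩ +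
            (c2 ⟨i.1, by have := i.2; omega⟩ x) • eu d ⟨i.1, by have := i.2; omega⟩) +
          (c2 ⟨k, by omega⟩ x) • eu d ⟨k, by omega⟩).2 j =
          (∑ i : Fin k, (c2 ⟨i.1, by have := i.2; omega⟩ x) *
            (if (⟨i.1, by have := i.2; omega⟩ : Fin d) = j then (1:ℝ) else 0)) +
          (c2 ⟨k, by omega⟩ x) * (if (⟨k, by omega⟩ : Fin d) = j then (1:ℝ) else 0) := by
        simp [eu, ez, Prod.snd_sum, Pi.single_apply, mul_ite, eq_comm]
      rw [hr, sum_single_pi d k (by omega)]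
      show c2 j x = _
      rcases lt_trichotomy j.1 k with h | h | h
      · rw [dif_pos h, if_neg (by intro hcon; have hkj : k = j.1 := (by rw [← hcon]); omega),
          mul_zero, add_zero]
      · have hj : j = (⟨k, by omega⟩ : Fin d) := by apply Fin.ext; show j.1 = k; exact h
        rw [dif_neg (by omega), hj, if_pos rfl, mul_one, zero_add]
      · rw [dif_neg (by omega), if_neg (by intro hcon; have hkj : k = j.1 := (by rw [← hcon]); omega)]
        have h0 : c2 j = 0 := hsc2 j (by omega)
        rw [h0, mul_zero, zero_add]
        rfl
end
end
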